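/- arXiv:1012.0689 — 2 statements merged into one kernel-verified Lean document; each statement's English description precedes it below -/
import Mathlib

section
/- Let ε ∈ (0,1) and A ≥ 0, and let (Γ_ℓ) be the recursively defined family of functions below. Then each Γ_ℓ is holomorphic on the open set ℂ ∖ Ω_ε, and there exists a constant d > 0 such that for every h ∈ ℕ there is a constant C > 0 with |(d/dλ)^h Γ_ℓ(λ)| ≤ C · ℓ^d · (1 + |λ|)^{−h−1} for every positive integer ℓ and every λ ∈ ℂ ∖ Ω_ε. -/
/-- The excluded region `Ω_ε = {λ ∈ ℂ : |Re λ| ≤ ε|λ|, Im λ ≤ -(1-ε)/2}`. -/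
def OmegaSet (ε : ℝ) : Set ℂ :=
  {z : ℂ | |z.re| ≤ ε * ‖z‖ ∧ z.im ≤ -(1 - ε) / 2}

open Complex Metric Finset

lemma omega_mono {ε : ℝ} (hε0 : 0 < ε) (hε1 : ε < 1) {z : ℂ}
    (hz : z ∈ OmegaSet (ε/2)) : z ∈ OmegaSet ε := by
  obtain ⟨h1, h2⟩ := hz
  have := norm_nonneg z
  constructor
  · nlinarith
  · nlinarith [h2]

lemma omega_compl_open (ε : ℝ) : IsOpen (OmegaSet ε)ᶜ := by
  rw [isOpen_compl_iff]
  have : OmegaSet ε = {z : ℂ | |z.re| ≤ ε * ‖z‖} ∩ {z : ℂ | z.im ≤ -(1-ε)/2} := rfl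
  rw [this]
  exact (isClosed_le (by fun_prop) (by continuity)).inter (isClosed_le (by fun_prop) continuous_const)

lemma key_lb {ε : ℝ} (hε0 : 0 < ε) (hε1 : ε < 1) {s : ℝ} (hs : 1 ≤ s) {z : ℂ}
    (hz : z ∉ OmegaSet ε) :
    ε/4 * (s + ‖z‖) ≤ ‖(s : ℂ) - 2*Complex.I*z‖ := by
  set a := ‖z‖ with ha
  set w := (s : ℂ) - 2*Complex.I*z with hw
  have hwre : w.re = s + 2*z.im := by simp [hw]
  have hwim : w.im = -2*z.re := by simp [hw]
  have h1 : s + 2*z.im ≤ ‖w‖ := by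
    calc s + 2*z.im ≤ |w.re| := by rw [hwre]; exact le_abs_self _
    _ ≤ ‖w‖ := Complex.abs_re_le_norm w
  have h2 : 2*|z.re| ≤ ‖w‖ := by
    have : |w.im| ≤ ‖w‖ := Complex.abs_im_le_norm w
    rw [hwim] at this
    rw [abs_mul] at this
    simpa using this
  have h3 : 2*a - s ≤ ‖w‖ := by
    have : ‖2*Complex.I*z‖ - ‖(s:ℂ)‖ ≤ ‖(2*Complex.I*z) - s‖ := by
      simpa using norm_sub_norm_le (2*Complex.I*z) (s:ℂ)
    have habs : ‖(2*Complex.I*z) - s‖ = ‖w‖ := by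
      rw [hw, ← norm_neg]; ring_nf
    rw [habs] at this
    simp [norm_mul, Complex.norm_I, Complex.norm_ofNat] at this
    have hsabs : |s| = s := abs_of_pos (by linarith)
    nlinarith [this]
  have hxa : |z.re| ≤ a := Complex.abs_re_le_norm z
  have hya : |z.im| ≤ a := Complex.abs_im_le_norm z
  have ha0 : 0 ≤ a := norm_nonneg z
  have hz' : ε * a < |z.re| ∨ -(1-ε)/2 < z.im := by
    by_contra hcon
    push_neg at hcon
    exact hz ⟨hcon.1, hcon.2⟩
  rcases hz' with hx | hy
  · rcases le_or_gt s (4*a) with hc | hc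
    · nlinarith [abs_nonneg z.re]
    · have : |2*z.im| ≤ 2*a := by rw [abs_mul]; simp; nlinarith
      nlinarith [neg_abs_le (2*z.im)]
  · rcases le_or_gt a s with hc | hc
    · nlinarith
    · nlinarith

lemma ball_avoid {ε : ℝ} (hε0 : 0 < ε) (hε1 : ε < 1) {z w : ℂ}
    (hz : z ∉ OmegaSet ε) (hd : ‖w - z‖ ≤ ε/100 * (1 + ‖z‖)) :
    w ∉ OmegaSet (ε/2) := by
  intro hw
  apply hz
  obtain ⟨hw1, hw2⟩ := hw
  set a := ‖z‖ with ha
  set b := ‖w‖ with hb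
  set D := ‖w - z‖ with hD
  have ha0 : 0 ≤ a := norm_nonneg z
  have hD0 : 0 ≤ D := norm_nonneg _
  have hre : |z.re| ≤ |w.re| + D := by
    have h1 : |(w - z).re| ≤ D := Complex.abs_re_le_norm _
    have : z.re = w.re - (w - z).re := by simp
    rw [this]
    calc |w.re - (w-z).re| ≤ |w.re| + |(w-z).re| := abs_sub _ _
    _ ≤ |w.re| + D := by linarith
  have him : z.im ≤ w.im + D := by
    have h1 : |(w - z).im| ≤ D := Complex.abs_im_le_norm _
    have : z.im = w.im - (w - z).im := by simp
    rw [this]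
    nlinarith [neg_abs_le ((w-z).im), le_abs_self ((w-z).im)]
  have hba : a - D ≤ b ∧ b ≤ a + D := by
    constructor
    · have h := norm_sub_le w (w - z)
      have he : w - (w - z) = z := by ring
      rw [he] at h
      linarith
    · calc b = ‖(w - z) + z‖ := by rw [hb]; ring_nf
      _ ≤ D + a := norm_add_le _ _
      _ = a + D := by ring
  -- lower bound on -w.im : w.im ≤ -(4/5) b
  have him45 : w.im ≤ -(4/5) * b := by
    have hsq : w.re^2 + w.im^2 = b^2 := by
      rw [hb, Complex.sq_norm, Complex.normSq_apply]; ring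
    have hb0 : 0 ≤ b := norm_nonneg w
    have hwim0 : w.im ≤ 0 := by nlinarith
    have hre2 : w.re^2 ≤ (1/4)*b^2 := by
      have h4 : (0:ℝ) ≤ (1-ε)*((1+ε)*b^2) :=
        mul_nonneg (by linarith) (mul_nonneg (by linarith) (sq_nonneg b))
      nlinarith [_root_.sq_abs w.re, mul_self_le_mul_self (abs_nonneg w.re) hw1]
    nlinarith [sq_nonneg (w.im + (4/5)*b), sq_nonneg b, hw2, hε1]
  rcases le_or_gt a 1 with hc | hc
  · have him2 : z.im ≤ -(1-ε)/2 := by nlinarith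
    have haim : -z.im ≤ a := by
      have := Complex.abs_im_le_norm z
      nlinarith [neg_abs_le z.im]
    constructor
    · nlinarith [abs_nonneg w.re]
    · exact him2
  · constructor
    · nlinarith [abs_nonneg w.re]
    · nlinarith

noncomputable def Gfun (ω : ℕ → ℂ) : ℕ → ℂ → ℂ
  | 0 => fun _ => 1
  | (m+1) => fun z => (((m+1 : ℕ) : ℂ) * (((m+1 : ℕ) : ℂ) - 2*Complex.I*z))⁻¹ *
      ∑ j ∈ (Finset.range (m+1)).attach,
        ω ((m+1) - j.1) * Gfun ω j.1 z
  decreasing_by exact Finset.mem_range.mp j.2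

lemma Gfun_succ (ω : ℕ → ℂ) (m : ℕ) (z : ℂ) :
    Gfun ω (m+1) z = (((m+1 : ℕ) : ℂ) * (((m+1 : ℕ) : ℂ) - 2*Complex.I*z))⁻¹ *
      ∑ j ∈ Finset.range (m+1), ω ((m+1) - j) * Gfun ω j z := by
  rw [Gfun]
  simp only []
  congr 1
  exact Finset.sum_attach (Finset.range (m+1)) (fun j => ω ((m+1)-j) * Gfun ω j z)

lemma sum_pow_le (B : ℕ) (hB : 1 ≤ B) (n : ℕ) :
    ((B:ℝ)+1) * ∑ j ∈ Finset.range n, (j:ℝ)^B ≤ (n:ℝ)^(B+1) := by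
  induction n with
  | zero => simp
  | succ n IH =>
    rw [Finset.sum_range_succ, mul_add]
    have key : (n:ℝ)^(B+1) + ((B:ℝ)+1) * (n:ℝ)^B ≤ ((n:ℝ)+1)^(B+1) := by
      rcases Nat.eq_zero_or_pos n with rfl | hn
      · have hB0 : B ≠ 0 := by omega
        simp [zero_pow hB0]
      · have hn0 : (0:ℝ) < n := by exact_mod_cast hn
        have hb := one_add_mul_le_pow (show (-2:ℝ) ≤ 1/n by linarith [one_div_nonneg.mpr hn0.le]) (B+1)
        have hposn : (0:ℝ) < (n:ℝ)^(B+1) := by positivity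
        have h2 : ((n:ℝ))^(B+1) * (1 + ((B:ℝ)+1) * (1/n)) ≤ ((n:ℝ))^(B+1) * (1+1/n)^(B+1) := by
          apply mul_le_mul_of_nonneg_left _ hposn.le
          exact_mod_cast hb
        have h3 : ((n:ℝ))^(B+1) * (1+1/n)^(B+1) = ((n:ℝ)+1)^(B+1) := by
          rw [← mul_pow]; congr 1; field_simp
        have h4 : ((n:ℝ))^(B+1) * (1 + ((B:ℝ)+1) * (1/n)) =
            (n:ℝ)^(B+1) + ((B:ℝ)+1) * (n:ℝ)^B := by
          have hp : (n:ℝ)^(B+1) = (n:ℝ)^B * n := by rw [pow_succ]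
          rw [hp]
          field_simp
        rw [h4, h3] at h2
        exact h2
    push_cast
    nlinarith [key, IH]

lemma denom_ne {ε : ℝ} (hε0 : 0 < ε) (hε1 : ε < 1) {m : ℕ} {z : ℂ}
    (hz : z ∉ OmegaSet ε) :
    ((m+1:ℕ):ℂ) * (((m+1:ℕ):ℂ) - 2*Complex.I*z) ≠ 0 := by
  apply mul_ne_zero
  · exact Nat.cast_ne_zero.mpr (Nat.succ_ne_zero m)
  · have hkey := key_lb hε0 hε1 (show (1:ℝ) ≤ ((m+1:ℕ):ℝ) by exact_mod_cast Nat.one_le_iff_ne_zero.mpr (Nat.succ_ne_zero m)) hz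
    have hpos : 0 < ‖(((m+1:ℕ):ℝ):ℂ) - 2*Complex.I*z‖ := by
      have h0 := norm_nonneg z
      have hm : (1:ℝ) ≤ ((m+1:ℕ):ℝ) := by exact_mod_cast Nat.one_le_iff_ne_zero.mpr (Nat.succ_ne_zero m)
      nlinarith
    have := norm_pos_iff.mp hpos
    simpa using this

lemma Gfun_diff {ε : ℝ} (hε0 : 0 < ε) (hε1 : ε < 1) (ω : ℕ → ℂ) (ℓ : ℕ) :
    DifferentiableOn ℂ (Gfun ω ℓ) (OmegaSet ε)ᶜ := by
  induction ℓ using Nat.strong_induction_on with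
  | _ ℓ IH =>
    match ℓ with
    | 0 =>
      exact (differentiableOn_const (1:ℂ)).congr (fun z _ => by rw [Gfun])
    | (m+1) =>
      have he : Gfun ω (m+1) = fun z => (((m+1:ℕ):ℂ) * (((m+1:ℕ):ℂ) - 2*Complex.I*z))⁻¹ *
          ∑ j ∈ Finset.range (m+1), ω ((m+1) - j) * Gfun ω j z :=
        funext fun z => Gfun_succ ω m z
      rw [he]
      apply DifferentiableOn.mul
      · apply DifferentiableOn.inv
        · exact (differentiable_const _ |>.mul ((differentiable_const _).sub
            ((differentiable_const _).mul differentiable_id))).differentiableOn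
        · intro z hz
          exact denom_ne hε0 hε1 hz
      · exact DifferentiableOn.fun_sum fun j hj =>
          (differentiableOn_const _).mul (IH j (Finset.mem_range.mp hj))

set_option maxHeartbeats 1000000 in
lemma Gfun_bound {ε A : ℝ} (hε0 : 0 < ε) (hε1 : ε < 1) (hA : 0 ≤ A)
    {ω : ℕ → ℂ} (hω : ∀ j : ℕ, 1 ≤ j → ‖ω j‖ ≤ A * j)
    {B : ℕ} (hB1 : 1 ≤ B) (hB : 16*A/ε ≤ (B:ℝ)+1)
    {c : ℝ} (hc1 : 1 ≤ c) (hc : 16*A/ε ≤ c) :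
    ∀ ℓ : ℕ, 1 ≤ ℓ → ∀ z : ℂ, z ∉ OmegaSet (ε/2) →
      ‖Gfun ω ℓ z‖ ≤ c * (ℓ:ℝ)^B / (1 + ‖z‖) := by
  intro ℓ
  induction ℓ using Nat.strong_induction_on with
  | _ ℓ IH =>
    intro hℓ z hz
    match ℓ, hℓ with
    | (m+1), _ =>
      set a := ‖z‖ with ha
      have ha0 : 0 ≤ a := norm_nonneg z
      have hpa : (0:ℝ) < 1 + a := by linarith
      set L : ℝ := ((m+1:ℕ):ℝ) with hL
      have hL1 : (1:ℝ) ≤ L := by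
        rw [hL]; exact_mod_cast Nat.one_le_iff_ne_zero.mpr (Nat.succ_ne_zero m)
      set P : ℝ := L^B with hP
      have hP1 : (1:ℝ) ≤ P := one_le_pow₀ hL1
      set κ : ℝ := ε/8 with hκ
      have hκ0 : (0:ℝ) < κ := by rw [hκ]; linarith
      -- lower bound for the denominator
      have hkey : κ * (L + a) ≤ ‖((m+1:ℕ):ℂ) - 2*Complex.I*z‖ := by
        have h := key_lb (show (0:ℝ) < ε/2 by linarith) (show ε/2 < 1 by linarith) hL1 hz
        have : ((L:ℝ):ℂ) = ((m+1:ℕ):ℂ) := by rw [hL]; push_cast; ring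
        rw [this] at h
        calc κ * (L + a) = ε/2/4 * (L + a) := by rw [hκ]; ring
        _ ≤ _ := h
      set W := ‖((m+1:ℕ):ℂ) - 2*Complex.I*z‖ with hW
      have hW0 : 0 < W := by nlinarith
      have hDl : (0:ℝ) < L * (κ*(L+a)) := mul_pos (by linarith) (mul_pos hκ0 (by linarith))
      -- bound on the sum
      set S := ‖∑ j ∈ Finset.range (m+1), ω ((m+1) - j) * Gfun ω j z‖ with hS
      have hS0 : 0 ≤ S := norm_nonneg _
      have hsum : S ≤ A*L + A*L*c*(P*L)/(((B:ℝ)+1)*(1+a)) := by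
        have h1 : S ≤ ∑ j ∈ Finset.range (m+1), ‖ω ((m+1) - j) * Gfun ω j z‖ :=
          norm_sum_le _ _
        rw [Finset.sum_range_succ'] at h1
        have h0term : ‖ω ((m+1) - 0) * Gfun ω 0 z‖ ≤ A * L := by
          rw [Nat.sub_zero]
          have : Gfun ω 0 z = 1 := by rw [Gfun]
          rw [norm_mul, this, norm_one, mul_one]
          have := hω (m+1) (Nat.one_le_iff_ne_zero.mpr (Nat.succ_ne_zero m))
          rw [hL]; exact this
        have hterm : ∀ i ∈ Finset.range m, ‖ω ((m+1) - (i+1)) * Gfun ω (i+1) z‖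
            ≤ A*L*c*((i+1:ℕ):ℝ)^B/(1+a) := by
          intro i hi
          rw [norm_mul]
          have him : i < m := Finset.mem_range.mp hi
          have hsub1 : 1 ≤ (m+1) - (i+1) := by omega
          have hb1 : ‖ω ((m+1) - (i+1))‖ ≤ A * L := by
            calc ‖ω ((m+1) - (i+1))‖ ≤ A * (((m+1) - (i+1) : ℕ):ℝ) := hω _ hsub1
            _ ≤ A * L := by
              apply mul_le_mul_of_nonneg_left _ hA
              rw [hL]; exact_mod_cast Nat.sub_le _ _
          have hb2 : ‖Gfun ω (i+1) z‖ ≤ c*((i+1:ℕ):ℝ)^B/(1+a) :=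
            IH (i+1) (by omega) (by omega) z hz
          calc ‖ω ((m+1) - (i+1))‖ * ‖Gfun ω (i+1) z‖
              ≤ (A*L) * (c*((i+1:ℕ):ℝ)^B/(1+a)) := by
                apply mul_le_mul hb1 hb2 (norm_nonneg _)
                positivity
          _ = A*L*c*((i+1:ℕ):ℝ)^B/(1+a) := by ring
        have hsum2 : ∑ i ∈ Finset.range m, ‖ω ((m+1) - (i+1)) * Gfun ω (i+1) z‖
            ≤ ∑ i ∈ Finset.range m, A*L*c*((i+1:ℕ):ℝ)^B/(1+a) :=
          Finset.sum_le_sum hterm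
        have hpow : ∑ i ∈ Finset.range m, ((i+1:ℕ):ℝ)^B ≤ P*L/((B:ℝ)+1) := by
          have e1 : ∑ j ∈ Finset.range (m+1), ((j:ℕ):ℝ)^B
              = ∑ i ∈ Finset.range m, ((i+1:ℕ):ℝ)^B + ((0:ℕ):ℝ)^B := by
            exact Finset.sum_range_succ' (fun j => ((j:ℕ):ℝ)^B) m
          have e2 : ((0:ℕ):ℝ)^B = 0 := by
            rw [Nat.cast_zero]; exact zero_pow (by omega)
          have e3 := sum_pow_le B hB1 (m+1)
          have hBpos : (0:ℝ) < (B:ℝ)+1 := by positivity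
          rw [e1, e2, add_zero] at e3
          rw [le_div_iff₀ hBpos]
          calc (∑ i ∈ Finset.range m, ((i+1:ℕ):ℝ)^B) * ((B:ℝ)+1)
              = ((B:ℝ)+1) * ∑ i ∈ Finset.range m, ((i+1:ℕ):ℝ)^B := by ring
          _ ≤ ((m+1:ℕ):ℝ)^(B+1) := e3
          _ = P*L := by rw [hP, hL, pow_succ]
        have hsum3 : ∑ i ∈ Finset.range m, A*L*c*((i+1:ℕ):ℝ)^B/(1+a)
            ≤ A*L*c*(P*L)/(((B:ℝ)+1)*(1+a)) := by
          rw [← Finset.sum_div, ← Finset.mul_sum]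
          rw [div_le_div_iff₀ hpa (by positivity)]
          have hALc : 0 ≤ A*L*c := by positivity
          calc A*L*c * (∑ i ∈ Finset.range m, ((i+1:ℕ):ℝ)^B) * (((B:ℝ)+1)*(1+a))
              ≤ A*L*c * (P*L/((B:ℝ)+1)) * (((B:ℝ)+1)*(1+a)) := by
                apply mul_le_mul_of_nonneg_right _ (by positivity)
                exact mul_le_mul_of_nonneg_left hpow hALc
          _ = A*L*c*(P*L)*(1+a) := by field_simp
        linarith
      -- put it together
      have habs : ‖Gfun ω (m+1) z‖ = S / (L * W) := by
        rw [Gfun_succ, norm_mul, norm_inv, norm_mul, Complex.norm_natCast, div_eq_inv_mul]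
      rw [habs]
      have step1 : S / (L * W) ≤ S / (L * (κ*(L+a))) := by
        apply div_le_div_of_nonneg_left hS0 hDl
        exact mul_le_mul_of_nonneg_left hkey (by linarith)
      have step2 : S / (L * (κ*(L+a))) ≤ (A*L + A*L*c*(P*L)/(((B:ℝ)+1)*(1+a))) / (L * (κ*(L+a))) :=
        (div_le_div_iff_of_pos_right hDl).mpr hsum
      have step3 : (A*L + A*L*c*(P*L)/(((B:ℝ)+1)*(1+a))) / (L * (κ*(L+a)))
          ≤ c * P / (1 + a) := by
        rw [div_le_div_iff₀ hDl hpa]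
        have hexp : (A*L + A*L*c*(P*L)/(((B:ℝ)+1)*(1+a))) * (1+a)
            = A*L*(1+a) + A*L*c*P*L/((B:ℝ)+1) := by
          field_simp
        rw [hexp]
        have h2Ac : 2*A ≤ κ*c := by
          rw [hκ]
          rw [div_le_iff₀ hε0] at hc
          nlinarith
        have h2AB : 2*A ≤ κ*((B:ℝ)+1) := by
          rw [hκ]
          rw [div_le_iff₀ hε0] at hB
          nlinarith
        have hκc : (0:ℝ) ≤ κ*c/2 := by nlinarith
        have piece1 : A*L*(1+a) ≤ (1/2)*(c*P*(L*(κ*(L+a)))) := by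
          have t1 : A*L*(1+a) ≤ (κ*c/2)*(L*(1+a)) := by nlinarith [mul_nonneg (by linarith : (0:ℝ) ≤ L) hpa.le]
          have t2 : (κ*c/2)*(L*(1+a)) ≤ (1/2)*(c*P*(L*(κ*(L+a)))) := by
            have e2 : (1/2)*(c*P*(L*(κ*(L+a)))) - (κ*c/2)*(L*(1+a))
                = (κ*c/2)*L*((P-1)*(L+a) + (L-1)) := by ring
            have hnn2 : 0 ≤ (κ*c/2)*L*((P-1)*(L+a) + (L-1)) := by
              apply mul_nonneg (mul_nonneg hκc (by linarith))
              exact add_nonneg (mul_nonneg (by linarith) (by linarith)) (by linarith)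
            linarith [e2 ▸ hnn2]
          linarith
        have piece2 : A*L*c*P*L/((B:ℝ)+1) ≤ (1/2)*(c*P*(L*(κ*(L+a)))) := by
          rw [div_le_iff₀ (by positivity : (0:ℝ) < (B:ℝ)+1)]
          have e : (1/2)*(c*P*(L*(κ*(L+a))))*((B:ℝ)+1) - A*L*c*P*L
              = c*P*L*((κ*((B:ℝ)+1)/2 - A)*L + (1/2)*κ*((B:ℝ)+1)*a) := by ring
          have hnn : 0 ≤ c*P*L*((κ*((B:ℝ)+1)/2 - A)*L + (1/2)*κ*((B:ℝ)+1)*a) := by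
            apply mul_nonneg (mul_nonneg (mul_nonneg (by linarith) (by linarith)) (by linarith))
            apply add_nonneg
            · exact mul_nonneg (by linarith) (by linarith)
            · exact mul_nonneg (mul_nonneg (mul_nonneg (by norm_num) hκ0.le) (by positivity)) ha0
          linarith [e ▸ hnn]
        linarith
      calc S / (L * W) ≤ S / (L * (κ*(L+a))) := step1
      _ ≤ _ := step2
      _ ≤ c * P / (1 + a) := step3
      _ = c * ((m+1:ℕ):ℝ)^B / (1 + a) := by rw [hP, hL]

lemma cauchy_est {f : ℂ → ℂ} {z0 : ℂ} {R M : ℝ} (hR : 0 < R) (hM : 0 ≤ M)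
    (hf : DifferentiableOn ℂ f (Metric.closedBall z0 R))
    (hb : ∀ w ∈ Metric.closedBall z0 R, ‖f w‖ ≤ M) (n : ℕ) :
    ‖iteratedDeriv n f z0‖ ≤ n.factorial * M / R^n := by
  set R' : NNReal := ⟨R, hR.le⟩ with hR'
  have hcb : Metric.closedBall z0 (R' : ℝ) = Metric.closedBall z0 R := rfl
  have hps : HasFPowerSeriesOnBall f (cauchyPowerSeries f z0 R') z0 R' :=
    DifferentiableOn.hasFPowerSeriesOnBall (by rw [hcb]; exact hf) (by exact_mod_cast hR)
  have h1 := hps.factorial_smul (1:ℂ) n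
  have h2 : iteratedDeriv n f z0 = iteratedFDeriv ℂ n f z0 (fun _ => 1) :=
    iteratedDeriv_eq_iteratedFDeriv
  have h3 : ‖iteratedDeriv n f z0‖
      = n.factorial * ‖cauchyPowerSeries f z0 R' n (fun _ => (1:ℂ))‖ := by
    rw [h2, ← h1]
    simp [norm_smul]
  rw [h3]
  have h4 : ‖cauchyPowerSeries f z0 R' n (fun _ => (1:ℂ))‖ ≤ ‖cauchyPowerSeries f z0 R' n‖ := by
    have := (cauchyPowerSeries f z0 R' n).le_opNorm (fun _ => (1:ℂ))
    simpa using this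
  have h5 : ‖cauchyPowerSeries f z0 (R' : ℝ) n‖ ≤
      ((2 * Real.pi)⁻¹ * ∫ θ : ℝ in (0)..2 * Real.pi, ‖f (circleMap z0 (R':ℝ) θ)‖) * |(R':ℝ)|⁻¹ ^ n :=
    norm_cauchyPowerSeries_le f z0 (R' : ℝ) n
  have hint : (∫ θ : ℝ in (0)..2 * Real.pi, ‖f (circleMap z0 (R':ℝ) θ)‖) ≤ 2 * Real.pi * M := by
    have hcont : Continuous fun θ : ℝ => ‖f (circleMap z0 (R':ℝ) θ)‖ := by
      apply Continuous.norm
      apply hf.continuousOn.comp_continuous (continuous_circleMap _ _)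
      intro θ
      rw [← hcb]
      exact Metric.sphere_subset_closedBall (circleMap_mem_sphere z0 (by exact_mod_cast hR.le) θ)
    calc (∫ θ : ℝ in (0)..2 * Real.pi, ‖f (circleMap z0 (R':ℝ) θ)‖)
        ≤ ∫ _ : ℝ in (0)..2 * Real.pi, M := by
          apply intervalIntegral.integral_mono_on Real.two_pi_pos.le
            (hcont.intervalIntegrable _ _) (intervalIntegrable_const)
          intro θ _
          apply hb
          rw [← hcb]
          exact Metric.sphere_subset_closedBall (circleMap_mem_sphere z0 (by exact_mod_cast hR.le) θ)
    _ = 2 * Real.pi * M := by simp [mul_comm]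
  have habsR : |(R':ℝ)| = R := abs_of_pos hR
  have hfin : ‖cauchyPowerSeries f z0 (R':ℝ) n‖ ≤ M / R^n := by
    calc ‖cauchyPowerSeries f z0 (R':ℝ) n‖
        ≤ ((2 * Real.pi)⁻¹ * (2 * Real.pi * M)) * |(R':ℝ)|⁻¹ ^ n := by
          apply h5.trans
          apply mul_le_mul_of_nonneg_right _ (by positivity)
          exact mul_le_mul_of_nonneg_left hint (by positivity)
    _ = M / R^n := by
          rw [habsR, inv_pow, ← div_eq_mul_inv]
          congr 1
          field_simp
  calc (n.factorial : ℝ) * ‖cauchyPowerSeries f z0 R' n (fun _ => (1:ℂ))‖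
      ≤ (n.factorial : ℝ) * (M / R^n) := by
        apply mul_le_mul_of_nonneg_left (h4.trans hfin) (by positivity)
  _ = n.factorial * M / R^n := by ring

lemma Gamma_eq {ε : ℝ} (Γ : ℕ → ℂ → ℂ) (ω : ℕ → ℂ)
    (hΓ0 : ∀ z : ℂ, Γ 0 z = 1)
    (hΓ : ∀ ℓ : ℕ, 1 ≤ ℓ → ∀ z : ℂ, z ∉ OmegaSet ε →
      Γ ℓ z = ((ℓ : ℂ) * ((ℓ : ℂ) - 2 * Complex.I * z))⁻¹ *
        ∑ j ∈ Finset.range ℓ, ω (ℓ - j) * Γ j z) :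
    ∀ ℓ : ℕ, ∀ z : ℂ, z ∉ OmegaSet ε → Γ ℓ z = Gfun ω ℓ z := by
  intro ℓ
  induction ℓ using Nat.strong_induction_on with
  | _ ℓ IH =>
    intro z hz
    match ℓ with
    | 0 => rw [hΓ0, Gfun]
    | (m+1) =>
      rw [hΓ (m+1) (Nat.one_le_iff_ne_zero.mpr (Nat.succ_ne_zero m)) z hz, Gfun_succ]
      push_cast
      congr 1
      apply Finset.sum_congr rfl
      intro j hj
      rw [IH j (Finset.mem_range.mp hj) z hz]

/-- Given `ε ∈ (0,1)`, `A ≥ 0`, coefficients `ω` with `|ω_j| ≤ A·j`, and the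
recursively defined functions `Γ_ℓ`, each `Γ_ℓ` is holomorphic on the open set
`ℂ ∖ Ω_ε`, and there is `d > 0` such that for every `h ∈ ℕ` there is `C > 0`
with `|∂_λ^h Γ_ℓ(λ)| ≤ C ℓ^d (1 + |λ|)^{-h-1}` for all `ℓ ≥ 1` and
`λ ∈ ℂ ∖ Ω_ε`. -/
theorem stmt2 (ε : ℝ) (hε0 : 0 < ε) (hε1 : ε < 1)
    (A : ℝ) (hA : 0 ≤ A) (ω : ℕ → ℂ)
    (hω : ∀ j : ℕ, 1 ≤ j → ‖ω j‖ ≤ A * j)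
    (Γ : ℕ → ℂ → ℂ)
    (hΓ0 : ∀ z : ℂ, Γ 0 z = 1)
    (hΓ : ∀ ℓ : ℕ, 1 ≤ ℓ → ∀ z : ℂ, z ∉ OmegaSet ε →
      Γ ℓ z = ((ℓ : ℂ) * ((ℓ : ℂ) - 2 * Complex.I * z))⁻¹ *
        ∑ j ∈ Finset.range ℓ, ω (ℓ - j) * Γ j z) :
    (∀ ℓ : ℕ, DifferentiableOn ℂ (Γ ℓ) (OmegaSet ε)ᶜ) ∧
    ∃ d : ℝ, 0 < d ∧ ∀ h : ℕ, ∃ C : ℝ, 0 < C ∧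
      ∀ ℓ : ℕ, 1 ≤ ℓ → ∀ z : ℂ, z ∉ OmegaSet ε →
        ‖iteratedDerivWithin h (Γ ℓ) (OmegaSet ε)ᶜ z‖ ≤
          C * (ℓ : ℝ) ^ d * (1 + ‖z‖) ^ (-(h : ℝ) - 1) := by
  have hEq := Gamma_eq Γ ω hΓ0 hΓ
  have hU : IsOpen (OmegaSet ε)ᶜ := omega_compl_open ε
  have hε20 : (0:ℝ) < ε/2 := by linarith
  have hε21 : ε/2 < 1 := by linarith
  have hnotin : ∀ z : ℂ, z ∉ OmegaSet ε → z ∉ OmegaSet (ε/2) := by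
    intro z hz hz2
    exact hz (omega_mono hε0 hε1 hz2)
  constructor
  · intro ℓ
    exact (Gfun_diff hε0 hε1 ω ℓ).congr (fun z hz => hEq ℓ z hz)
  · set B : ℕ := ⌈16*A/ε⌉₊ + 1 with hBdef
    have hB1 : 1 ≤ B := by omega
    have hB : 16*A/ε ≤ (B:ℝ)+1 := by
      calc 16*A/ε ≤ (⌈16*A/ε⌉₊ : ℝ) := Nat.le_ceil _
      _ ≤ (B:ℝ)+1 := by rw [hBdef]; push_cast; linarith
    set c : ℝ := 16*A/ε + 1 with hcdef
    have hc1 : 1 ≤ c := by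
      have h0 : 0 ≤ 16*A/ε := by positivity
      rw [hcdef]; linarith
    have hc : 16*A/ε ≤ c := by rw [hcdef]; linarith
    have hGb := Gfun_bound hε0 hε1 hA hω hB1 hB hc1 hc
    refine ⟨(B:ℝ), by exact_mod_cast Nat.lt_of_lt_of_le Nat.zero_lt_one hB1, fun h => ?_⟩
    refine ⟨(h.factorial : ℝ) * (2*c) * (100/ε)^h, by positivity, ?_⟩
    intro ℓ hℓ z hz
    set a := ‖z‖ with ha
    have ha0 : 0 ≤ a := norm_nonneg z
    have hpa : (0:ℝ) < 1 + a := by linarith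
    set r : ℝ := ε/100*(1+a) with hrdef
    have hr : 0 < r := by positivity
    have hball : Metric.closedBall z r ⊆ (OmegaSet (ε/2))ᶜ := by
      intro w hw
      simp only [Set.mem_compl_iff]
      apply ball_avoid hε0 hε1 hz
      rw [Metric.mem_closedBall, Complex.dist_eq] at hw
      exact hw
    have hdiff : DifferentiableOn ℂ (Gfun ω ℓ) (Metric.closedBall z r) :=
      (Gfun_diff hε20 hε21 ω ℓ).mono hball
    set M : ℝ := 2*c*(ℓ:ℝ)^B/(1+a) with hMdef
    have hM : 0 ≤ M := by positivity
    have hbd : ∀ w ∈ Metric.closedBall z r, ‖Gfun ω ℓ w‖ ≤ M := by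
      intro w hw
      have hw2 : w ∉ OmegaSet (ε/2) := hball hw
      have h1 : ‖Gfun ω ℓ w‖ ≤ c*(ℓ:ℝ)^B/(1 + ‖w‖) := hGb ℓ hℓ w hw2
      have hlow : (1+a)/2 ≤ 1 + ‖w‖ := by
        rw [Metric.mem_closedBall, Complex.dist_eq] at hw
        have h2 : a ≤ ‖w‖ + ‖w - z‖ := by
          have h3 := norm_sub_le w (w - z)
          have he : w - (w - z) = z := by ring
          rw [he] at h3
          exact h3
        have hre : r ≤ (1+a)/100 := by
          rw [hrdef]
          nlinarith
        linarith
      calc ‖Gfun ω ℓ w‖ ≤ c*(ℓ:ℝ)^B/(1 + ‖w‖) := h1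
      _ ≤ c*(ℓ:ℝ)^B/((1+a)/2) := by
          apply div_le_div_of_nonneg_left (by positivity) (by positivity) hlow
      _ = M := by rw [hMdef]; field_simp
    have hca := cauchy_est hr hM hdiff hbd h
    -- rewrite LHS
    have hzU : z ∈ (OmegaSet ε)ᶜ := hz
    have hLHS : iteratedDerivWithin h (Γ ℓ) (OmegaSet ε)ᶜ z = iteratedDeriv h (Gfun ω ℓ) z := by
      have e1 : iteratedDerivWithin h (Γ ℓ) (OmegaSet ε)ᶜ z
          = iteratedDerivWithin h (Gfun ω ℓ) (OmegaSet ε)ᶜ z :=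
        iteratedDerivWithin_congr (fun w hw => hEq ℓ w hw) hzU
      rw [e1, iteratedDerivWithin_eq_iteratedFDerivWithin, iteratedDeriv_eq_iteratedFDeriv,
        iteratedFDerivWithin_of_isOpen h hU hzU]
    rw [hLHS]
    -- rewrite RHS
    have hrp1 : (ℓ:ℝ)^((B:ℕ):ℝ) = (ℓ:ℝ)^B := Real.rpow_natCast _ B
    have hrp2 : (1+a)^(-(h:ℝ)-1) = ((1+a)^(h+1))⁻¹ := by
      rw [show -(h:ℝ)-1 = -((h+1:ℕ):ℝ) by push_cast; ring, Real.rpow_neg hpa.le,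
        Real.rpow_natCast]
    rw [hrp1, hrp2]
    apply hca.trans
    have : (h.factorial : ℝ) * M / r^h
        = (h.factorial : ℝ) * (2*c) * (100/ε)^h * (ℓ:ℝ)^B * ((1+a)^(h+1))⁻¹ := by
      rw [hMdef, hrdef, mul_pow, div_pow, div_pow]
      field_simp
      ring
    rw [this]
end

section
/- Let m ∈ ℕ, ζ ∈ ℝ and ν < −m−1. Let χ : ℝ → ℝ be smooth with 0 ≤ χ ≤ 1, χ = 0 on (−∞,1] and χ = 1 on [2,∞). Let f : ℝ → ℂ be smooth with sup_{λ∈ℝ} (1+|λ|)^{ℓ−ν} |f^{(ℓ)}(λ)| < ∞ for every ℓ ∈ ℕ, and set b(λ) = ζ · χ(λ) · λ^{−m−1−iζ} + f(λ). Then for every x with 0 < |x| < 1/2 the improper integral K(x) = lim_{T→∞} ∫_{−T}^{T} b(λ) (iλ)^m e^{iλx} dλ exists, and there exists a constant C ≥ 0, depending only on m, ν and χ (but not on ζ, f or x), such that |K(x)| ≤ C · ( 1 + ζ² + sup_{λ∈ℝ} (1+|λ|)^{−ν} |f(λ)| ) for every 0 < |x| < 1/2. -/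
open Filter MeasureTheory Set intervalIntegral

section
variable {χ : ℝ → ℝ}

private lemma aux_contOn (c : ℂ) :
    ContinuousOn (fun l : ℝ => (l : ℂ) ^ c) (Set.Ioi (0:ℝ)) := fun l hl =>
  ((continuousAt_cpow_const (Complex.ofReal_mem_slitPlane.2 hl)).comp
    Complex.continuous_ofReal.continuousAt).continuousWithinAt

private lemma aux_cont_cpow (w : ℂ) (hχ : Continuous χ)
    (hχ0 : ∀ l : ℝ, l ≤ 1 → χ l = 0) :
    Continuous fun l : ℝ => (χ l : ℂ) * (l : ℂ) ^ w := by
  rw [continuous_iff_continuousAt]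
  intro l₀
  rcases lt_or_ge l₀ 1 with h | h
  · have hev : (fun l : ℝ => (χ l : ℂ) * (l : ℂ) ^ w) =ᶠ[nhds l₀] fun _ => (0:ℂ) := by
      filter_upwards [Iio_mem_nhds h] with l hl
      simp [hχ0 l (le_of_lt hl)]
    exact ContinuousAt.congr continuousAt_const hev.symm
  · have h0 : (0:ℝ) < l₀ := by linarith
    exact ((Complex.continuous_ofReal.comp hχ).continuousAt).mul
      ((continuousAt_cpow_const (Complex.ofReal_mem_slitPlane.2 h0)).comp
        Complex.continuous_ofReal.continuousAt)

private lemma aux_hasDerivAt_cpow (w : ℂ) (hw : w ≠ 0) {l : ℝ} (hl : l ≠ 0) :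
    HasDerivAt (fun y : ℝ => (y : ℂ) ^ w / w) ((l : ℂ) ^ (w - 1)) l := by
  have h := hasDerivAt_ofReal_cpow_const' hl (r := w - 1)
    (by intro h; apply hw; linear_combination h)
  simpa [sub_add_cancel] using h

private lemma aux_hasDerivAt_cpow' (w : ℂ) (hw : w ≠ 0) {l : ℝ} (hl : l ≠ 0) :
    HasDerivAt (fun y : ℝ => (y : ℂ) ^ w) (w * (l : ℂ) ^ (w - 1)) l := by
  have h := (aux_hasDerivAt_cpow w hw hl).const_mul w
  have heq : (fun y : ℝ => w * ((y:ℂ) ^ w / w)) = fun y : ℝ => (y:ℂ) ^ w := by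
    funext y; field_simp
  rw [heq] at h
  simpa [mul_comm] using h

private lemma aux_hasDerivAt_exp {x : ℝ} (hx : x ≠ 0) (l : ℝ) :
    HasDerivAt (fun y : ℝ => Complex.exp (Complex.I * y * x) / (Complex.I * x))
      (Complex.exp (Complex.I * l * x)) l := by
  have h1 : HasDerivAt (fun z : ℂ => Complex.exp (Complex.I * z * x))
      (Complex.exp (Complex.I * l * x) * (Complex.I * x)) (l : ℂ) := by
    simpa using (((hasDerivAt_id ((l : ℝ) : ℂ)).const_mul Complex.I).mul_const
      ((x : ℝ) : ℂ)).cexp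
  have hne : Complex.I * (x:ℂ) ≠ 0 := by
    simp [Complex.I_ne_zero, Complex.ofReal_eq_zero, hx]
  have h2 := (h1.comp_ofReal).div_const (Complex.I * x)
  simpa [mul_div_cancel_right₀ _ hne] using h2

end

set_option maxHeartbeats 2000000 in
/-- Lemma A.3: for `b(λ) = ζ χ(λ) λ^{-m-1-iζ} + f(λ)` with `χ` a smooth cutoff
(`0 ≤ χ ≤ 1`, `χ = 0` on `(-∞,1]`, `χ = 1` on `[2,∞)`) and `f` an inhomogeneous
symbol of order `ν < -m-1`, the improper integral
`K(x) = lim_{T→∞} ∫_{-T}^T b(λ)(iλ)^m e^{iλx} dλ` exists for `0 < |x| < 1/2`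
and satisfies `|K(x)| ≤ C (1 + ζ² + sup_λ (1+|λ|)^{-ν}|f(λ)|)` with `C`
depending only on `m`, `ν` and `χ`. -/
theorem stmt11 (m : ℕ) (ν : ℝ) (hν : ν < -(m : ℝ) - 1)
    (χ : ℝ → ℝ) (hχ : ContDiff ℝ (⊤ : ℕ∞) χ)
    (hχ01 : ∀ l : ℝ, 0 ≤ χ l ∧ χ l ≤ 1)
    (hχ0 : ∀ l : ℝ, l ≤ 1 → χ l = 0) (hχ1 : ∀ l : ℝ, 2 ≤ l → χ l = 1) :
    ∃ C : ℝ, 0 ≤ C ∧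
      ∀ (ζ : ℝ) (f : ℝ → ℂ), ContDiff ℝ (⊤ : ℕ∞) f →
        (∀ ℓ : ℕ, ∃ M : ℝ, ∀ l : ℝ,
          (1 + |l|) ^ ((ℓ : ℝ) - ν) * ‖iteratedDeriv ℓ f l‖ ≤ M) →
        ∀ x : ℝ, 0 < |x| → |x| < 1 / 2 →
          ∃ K : ℂ,
            Tendsto (fun T : ℝ => ∫ l in (-T)..T,
                ((ζ : ℂ) * (χ l : ℂ) * (l : ℂ) ^ (-(m : ℂ) - 1 - Complex.I * ζ) + f l) *
                  (Complex.I * l) ^ m * Complex.exp (Complex.I * l * x))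
              atTop (nhds K) ∧
            ‖K‖ ≤
              C * (1 + ζ ^ 2 + ⨆ l : ℝ, (1 + |l|) ^ (-ν) * ‖f l‖) := by
  have hp1 : ν + m < -1 := by linarith
  have hbase : ∀ l : ℝ, (0:ℝ) < 1 + |l| := fun l => by positivity
  -- the integrable majorant for the `f` part
  have hI₀int : Integrable (fun l : ℝ => (1 + ‖l‖) ^ (ν + m)) (volume : Measure ℝ) := by
    have h := integrable_one_add_norm (E := ℝ) (μ := (volume : Measure ℝ)) (r := -(ν + m))
      (by simp [Module.finrank_self]; linarith)
    simpa using h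
  set I₀ : ℝ := ∫ l : ℝ, (1 + ‖l‖) ^ (ν + m) with hI₀def
  have hI₀nn : 0 ≤ I₀ := integral_nonneg fun l => Real.rpow_nonneg (by positivity) _
  refine ⟨I₀ + 8, by positivity, ?_⟩
  intro ζ f hf hsym x hx0 hx2
  have hxne : x ≠ 0 := by intro h; simp [h] at hx0
  -- the sup `S` and the pointwise bound on `f`
  set S : ℝ := ⨆ l : ℝ, (1 + |l|) ^ (-ν) * ‖f l‖ with hSdef
  obtain ⟨M, hM⟩ := hsym 0
  have hbdd : BddAbove (Set.range fun l : ℝ => (1 + |l|) ^ (-ν) * ‖f l‖) := by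
    refine ⟨M, ?_⟩
    rintro - ⟨l, rfl⟩
    have := hM l
    simpa [zero_sub] using this
  have hSle : ∀ l : ℝ, (1 + |l|) ^ (-ν) * ‖f l‖ ≤ S := fun l =>
    le_ciSup hbdd l
  have hSnn : 0 ≤ S := le_trans (by positivity) (hSle 0)
  have hfS : ∀ l : ℝ, ‖f l‖ ≤ S * (1 + |l|) ^ ν := by
    intro l
    have h1 := hSle l
    calc ‖f l‖
        = (1 + |l|) ^ ν * ((1 + |l|) ^ (-ν) * ‖f l‖) := by
          rw [← mul_assoc, ← Real.rpow_add (hbase l)]; simp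
      _ ≤ (1 + |l|) ^ ν * S :=
          mul_le_mul_of_nonneg_left h1 (Real.rpow_nonneg (le_of_lt (hbase l)) ν)
      _ = S * (1 + |l|) ^ ν := mul_comm _ _
  -- the `f` part of the integrand
  set Ff : ℝ → ℂ := fun l => f l * (Complex.I * l) ^ m * Complex.exp (Complex.I * l * x)
    with hFfdef
  have hexp1 : ∀ l : ℝ, ‖Complex.exp (Complex.I * l * x)‖ = 1 := by
    intro l
    rw [Complex.norm_exp]
    simp [Complex.mul_re, Complex.mul_im]
  have hcexp : Continuous fun l : ℝ => Complex.exp (Complex.I * l * x) :=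
    Complex.continuous_exp.comp (by continuity)
  have hFfcont : Continuous Ff := by
    refine (hf.continuous.mul ?_).mul hcexp
    exact (continuous_const.mul Complex.continuous_ofReal).pow m
  have hFfb : ∀ l : ℝ, ‖Ff l‖ ≤ S * (1 + ‖l‖) ^ (ν + m) := by
    intro l
    have h1 : ‖Ff l‖ = ‖f l‖ * |l| ^ m := by
      simp [Ff, norm_mul, norm_pow, hexp1 l, Complex.norm_real, Real.norm_eq_abs, Complex.norm_I]
    have h2 : |l| ^ m ≤ (1 + |l|) ^ (m : ℝ) := by
      rw [Real.rpow_natCast]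
      exact pow_le_pow_left₀ (abs_nonneg l) (by linarith) m
    have h3 : ‖f l‖ * |l| ^ m ≤ (S * (1 + |l|) ^ ν) * ((1 + |l|) ^ (m : ℝ)) :=
      mul_le_mul (hfS l) h2 (by positivity) (by positivity)
    rw [h1, Real.norm_eq_abs]
    calc ‖f l‖ * |l| ^ m ≤ (S * (1 + |l|) ^ ν) * ((1 + |l|) ^ (m : ℝ)) := h3
      _ = S * (1 + |l|) ^ (ν + m) := by rw [mul_assoc, ← Real.rpow_add (hbase l)]
  have hFfint : Integrable Ff := (hI₀int.const_mul S).mono' hFfcont.aestronglyMeasurable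
    (Eventually.of_forall hFfb)
  set Kf : ℂ := ∫ l : ℝ, Ff l with hKfdef
  have hKftend : Tendsto (fun T : ℝ => ∫ l in (-T)..T, Ff l) atTop (nhds Kf) :=
    intervalIntegral_tendsto_integral hFfint tendsto_neg_atTop_atBot tendsto_id
  have hKfabs : ‖Kf‖ ≤ I₀ * S := by
    calc ‖Kf‖ ≤ ∫ l : ℝ, S * (1 + ‖l‖) ^ (ν + m) :=
          norm_integral_le_of_norm_le (hI₀int.const_mul S) (Eventually.of_forall hFfb)
      _ = S * I₀ := integral_const_mul S _
      _ = I₀ * S := mul_comm _ _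
  rcases eq_or_ne ζ 0 with hζ | hζ
  · subst hζ
    refine ⟨Kf, ?_, ?_⟩
    · refine hKftend.congr fun T => ?_
      refine intervalIntegral.integral_congr fun l _ => ?_
      simp [Ff]
    · skip
      calc ‖Kf‖ ≤ I₀ * S := hKfabs
        _ ≤ (I₀ + 8) * (1 + (0:ℝ) ^ 2 + S) := by nlinarith
  -- main case `ζ ≠ 0`
  set w : ℂ := -1 - Complex.I * ζ with hwdef
  have hwre : w.re = -1 := by simp [hwdef]
  have hw0 : w ≠ 0 := by
    intro h
    have := congrArg Complex.re h
    rw [hwre] at this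
    norm_num at this
  have hwp1 : w + 1 = -(Complex.I * ζ) := by rw [hwdef]; ring
  have hwp1ne : w + 1 ≠ 0 := by
    rw [hwp1]
    simp [Complex.I_ne_zero, Complex.ofReal_eq_zero, hζ]
  have habsw1 : ‖w + 1‖ = |ζ| := by
    rw [hwp1]
    simp [Complex.norm_real, Real.norm_eq_abs]
  set R : ℝ := 1 / |x| with hRdef
  have hR2 : 2 < R := by
    rw [hRdef, lt_div_iff₀ hx0]
    linarith
  have hR0 : 0 < R := by linarith
  have hRx : R * |x| = 1 := by
    rw [hRdef]; field_simp
  set G : ℝ → ℂ := fun l => (χ l : ℂ) * (l : ℂ) ^ w * Complex.exp (Complex.I * l * x)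
    with hGdef
  have hGcont : Continuous G := (aux_cont_cpow w hχ.continuous hχ0).mul hcexp
  have hGint : ∀ a b : ℝ, IntervalIntegrable G volume a b := fun a b =>
    hGcont.intervalIntegrable a b
  set v : ℝ → ℂ := fun l => Complex.exp (Complex.I * l * x) / (Complex.I * x) with hvdef
  set j : ℝ → ℂ := fun l => (l : ℂ) ^ (w - 1) * Complex.exp (Complex.I * l * x) with hjdef
  have habsj : ∀ l : ℝ, 0 < l → ‖j l‖ = l ^ (-2 : ℝ) := by
    intro l hl0
    rw [hjdef]
    simp only [norm_mul]
    rw [Complex.norm_cpow_eq_rpow_re_of_pos hl0, hexp1 l, mul_one]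
    congr 1
    rw [hwdef]
    simp only [Complex.sub_re, Complex.neg_re, Complex.one_re, Complex.mul_re]
    norm_num
  have hjcontOn : ContinuousOn j (Set.Ioi (0:ℝ)) := (aux_contOn (w-1)).mul hcexp.continuousOn
  have hrpow2int : IntegrableOn (fun l : ℝ => l ^ (-2 : ℝ)) (Set.Ioi R) volume :=
    integrableOn_Ioi_rpow_of_lt (by norm_num) hR0
  have hjIoiR : Set.Ioi R ⊆ Set.Ioi (0:ℝ) := Set.Ioi_subset_Ioi hR0.le
  have hjae : ∀ᵐ l ∂(volume.restrict (Set.Ioi R)), ‖j l‖ ≤ l ^ (-2 : ℝ) := by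
    rw [ae_restrict_iff' measurableSet_Ioi]
    exact Eventually.of_forall fun l hl => le_of_eq (habsj l (hR0.trans hl))
  have hJint : IntegrableOn j (Set.Ioi R) volume :=
    Integrable.mono' hrpow2int
      ((hjcontOn.mono hjIoiR).aestronglyMeasurable measurableSet_Ioi) hjae
  set J : ℂ := ∫ l in Set.Ioi R, j l with hJdef
  have hJtend : Tendsto (fun T : ℝ => ∫ l in R..T, j l) atTop (nhds J) :=
    intervalIntegral_tendsto_integral_Ioi R hJint tendsto_id
  have hJabs : ‖J‖ ≤ |x| := by
    calc ‖J‖ ≤ ∫ l in Set.Ioi R, l ^ (-2 : ℝ) := norm_integral_le_of_norm_le hrpow2int hjae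
      _ = -(R ^ ((-2:ℝ) + 1)) / ((-2:ℝ) + 1) := integral_Ioi_rpow_of_lt (by norm_num) hR0
      _ = R ^ (-1 : ℝ) := by norm_num
      _ = |x| := by rw [Real.rpow_neg_one, hRdef]; field_simp
  -- integration by parts on `[R, T]`
  have hIBP : ∀ T : ℝ, R ≤ T → (∫ l in R..T, (l:ℂ)^w * Complex.exp (Complex.I*l*x))
      = (T:ℂ)^w * v T - (R:ℂ)^w * v R - (w / (Complex.I * x)) * ∫ l in R..T, j l := by
    intro T hT
    have huIcc : Set.uIcc R T ⊆ Set.Ioi (0:ℝ) := by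
      rw [Set.uIcc_of_le hT]
      exact fun l hl => lt_of_lt_of_le hR0 hl.1
    have hu : ∀ l ∈ Set.uIcc R T, HasDerivAt (fun y : ℝ => (y:ℂ)^w) (w * (l:ℂ)^(w-1)) l :=
      fun l hl => aux_hasDerivAt_cpow' w hw0 (ne_of_gt (huIcc hl))
    have hv : ∀ l ∈ Set.uIcc R T, HasDerivAt v (Complex.exp (Complex.I*l*x)) l :=
      fun l _ => aux_hasDerivAt_exp hxne l
    have hu' : IntervalIntegrable (fun l : ℝ => w * (l:ℂ)^(w-1)) volume R T := by
      refine (continuousOn_const.mul ((aux_contOn (w-1)).mono ?_)).intervalIntegrable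
      exact huIcc
    have hv' : IntervalIntegrable (fun l : ℝ => Complex.exp (Complex.I*l*x)) volume R T :=
      hcexp.intervalIntegrable _ _
    have h := intervalIntegral.integral_mul_deriv_eq_deriv_mul hu hv hu' hv'
    rw [h]
    congr 1
    rw [← intervalIntegral.integral_const_mul]
    refine intervalIntegral.integral_congr fun l _ => ?_
    simp only [hvdef, hjdef]
    ring
  -- the boundary term tends to zero
  have hb1 : Tendsto (fun T : ℝ => (T:ℂ)^w * v T) atTop (nhds 0) := by
    apply squeeze_zero_norm' (a := fun T : ℝ => T ^ (-1:ℝ) * (1/|x|))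
    · filter_upwards [eventually_gt_atTop (0:ℝ)] with T hT
      have hvn : ‖v T‖ = 1/|x| := by
        rw [hvdef]
        simp only [norm_div, hexp1 T, norm_mul, Complex.norm_I, Complex.norm_real, Real.norm_eq_abs, one_mul]
      rw [norm_mul, Complex.norm_cpow_eq_rpow_re_of_pos hT, hwre, hvn]
    · simpa using (tendsto_rpow_neg_atTop (y := 1) one_pos).mul_const (1/|x|)
  -- splitting of the integral of G
  have hGzero : ∀ l : ℝ, l ≤ 1 → G l = 0 := fun l hl => by simp [hGdef, hχ0 l hl]
  have hsplitG : ∀ T : ℝ, R ≤ T → (∫ l in (-T)..T, G l)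
      = (∫ l in (1:ℝ)..R, G l) + ∫ l in R..T, (l:ℂ)^w * Complex.exp (Complex.I*l*x) := by
    intro T hT
    have h1T : (1:ℝ) ≤ T := by linarith
    have h1 : (∫ l in (-T)..(1:ℝ), G l) = 0 := by
      have : (∫ l in (-T)..(1:ℝ), G l) = ∫ _ in (-T)..(1:ℝ), (0:ℂ) := by
        refine intervalIntegral.integral_congr fun l hl => ?_
        rw [Set.uIcc_of_le (by linarith : -T ≤ 1)] at hl
        exact hGzero l hl.2
      rw [this, intervalIntegral.integral_const, smul_zero]
    have h2 : (∫ l in R..T, G l) = ∫ l in R..T, (l:ℂ)^w * Complex.exp (Complex.I*l*x) := by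
      refine intervalIntegral.integral_congr fun l hl => ?_
      rw [Set.uIcc_of_le hT] at hl
      simp only [hGdef, hχ1 l (by linarith [hl.1] : (2:ℝ) ≤ l), Complex.ofReal_one, one_mul]
    rw [← intervalIntegral.integral_add_adjacent_intervals (hGint (-T) 1) (hGint 1 T),
      ← intervalIntegral.integral_add_adjacent_intervals (hGint 1 R) (hGint R T), h1, h2]
    ring
  -- the limit L
  set A : ℂ := ∫ l in (1:ℝ)..R, G l with hAdef
  set L : ℂ := A + ((0 - (R:ℂ)^w * v R) - (w / (Complex.I*x)) * J) with hLdef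
  have hGlim : Tendsto (fun T : ℝ => ∫ l in (-T)..T, G l) atTop (nhds L) := by
    have h := (((hb1.sub_const ((R:ℂ)^w * v R)).sub
      (hJtend.const_mul (w / (Complex.I*x)))).const_add A)
    refine Tendsto.congr' ?_ h
    filter_upwards [eventually_ge_atTop R] with T hT
    rw [hsplitG T hT, hIBP T hT]
  -- bound the pieces of A
  set g1 : ℝ → ℂ := fun l => (χ l : ℂ) * (l:ℂ)^w * (Complex.exp (Complex.I*l*x) - 1)
    with hg1def
  set g2 : ℝ → ℂ := fun l => (χ l : ℂ) * (l:ℂ)^w with hg2def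
  have hg2cont : Continuous g2 := aux_cont_cpow w hχ.continuous hχ0
  have hg1cont : Continuous g1 := hg2cont.mul (hcexp.sub continuous_const)
  have hcpabs : ∀ l : ℝ, 0 < l → ‖(l:ℂ)^w‖ = l⁻¹ := by
    intro l hl0
    rw [Complex.norm_cpow_eq_rpow_re_of_pos hl0, hwre, Real.rpow_neg_one]
  have hchiabs : ∀ l : ℝ, |χ l| ≤ 1 := fun l =>
    abs_le.2 ⟨by linarith [(hχ01 l).1], (hχ01 l).2⟩
  have hA12 : A = (∫ l in (1:ℝ)..R, g1 l)
      + ((∫ l in (1:ℝ)..(2:ℝ), g2 l) + ∫ l in (2:ℝ)..R, g2 l) := by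
    rw [intervalIntegral.integral_add_adjacent_intervals (hg2cont.intervalIntegrable 1 2)
        (hg2cont.intervalIntegrable 2 R),
      ← intervalIntegral.integral_add (hg1cont.intervalIntegrable 1 R)
        (hg2cont.intervalIntegrable 1 R)]
    refine intervalIntegral.integral_congr fun l _ => ?_
    simp only [hGdef, hg1def, hg2def]
    ring
  have habsg1 : ‖∫ l in (1:ℝ)..R, g1 l‖ ≤ 2 := by
    have hb : ∀ l ∈ Set.uIoc (1:ℝ) R, ‖g1 l‖ ≤ 2 * |x| := by
      intro l hl
      rw [Set.uIoc_of_le (by linarith : (1:ℝ) ≤ R)] at hl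
      have hl1 : 1 < l := hl.1
      have hlR : l ≤ R := hl.2
      have hl0 : 0 < l := by linarith
      have habs_e : ‖Complex.exp (Complex.I*l*x) - 1‖ ≤ 2 * (l * |x|) := by
        have h1 : ‖Complex.I * l * x‖ = l * |x| := by
          simp [norm_mul, Complex.norm_I, Complex.norm_real, Real.norm_eq_abs, abs_of_pos hl0]
        have h2 : ‖Complex.I*l*x‖ ≤ 1 := by
          rw [h1]
          calc l * |x| ≤ R * |x| := by nlinarith
            _ = 1 := hRx
        have := Complex.norm_exp_sub_one_le h2
        rwa [h1] at this
      calc ‖g1 l‖ = |χ l| * (‖(l:ℂ)^w‖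
            * ‖Complex.exp (Complex.I*l*x) - 1‖) := by
            simp [hg1def, norm_mul, Complex.norm_real, Real.norm_eq_abs, mul_assoc]
        _ ≤ 1 * (l⁻¹ * (2 * (l * |x|))) := by
            rw [hcpabs l hl0]
            gcongr
            exact hchiabs l
        _ = 2 * |x| := by field_simp
    calc ‖∫ l in (1:ℝ)..R, g1 l‖ ≤ 2*|x| * |R - 1| :=
        intervalIntegral.norm_integral_le_of_norm_le_const hb
      _ ≤ 2*|x| * R := by
          have hR1 : |R - 1| = R - 1 := abs_of_pos (by linarith)
          rw [hR1]
          nlinarith [abs_nonneg x]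
      _ = 2 * (R * |x|) := by ring
      _ = 2 := by rw [hRx, mul_one]
  have habsg2a : ‖∫ l in (1:ℝ)..(2:ℝ), g2 l‖ ≤ 1 := by
    have hb : ∀ l ∈ Set.uIoc (1:ℝ) (2:ℝ), ‖g2 l‖ ≤ 1 := by
      intro l hl
      rw [Set.uIoc_of_le (by norm_num)] at hl
      have hl1 : 1 < l := hl.1
      have hl0 : 0 < l := by linarith
      calc ‖g2 l‖ = |χ l| * ‖(l:ℂ)^w‖ := by
            simp [hg2def, norm_mul, Complex.norm_real, Real.norm_eq_abs]
        _ ≤ 1 * 1 := by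
            rw [hcpabs l hl0]
            gcongr
            · exact hchiabs l
            · rw [inv_le_one_iff₀]; right; linarith
        _ = 1 := one_mul 1
    calc ‖∫ l in (1:ℝ)..(2:ℝ), g2 l‖ ≤ 1 * |(2:ℝ) - 1| :=
        intervalIntegral.norm_integral_le_of_norm_le_const hb
      _ = 1 := by norm_num
  have hFTC : (∫ l in (2:ℝ)..R, g2 l)
      = ((R:ℝ):ℂ)^(w+1)/(w+1) - ((2:ℝ):ℂ)^(w+1)/(w+1) := by
    have huIcc2 : Set.uIcc (2:ℝ) R ⊆ Set.Ioi (0:ℝ) := by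
      rw [Set.uIcc_of_le (by linarith : (2:ℝ) ≤ R)]
      exact fun l hl => by simp at hl ⊢; linarith [hl.1]
    have h1 : (∫ l in (2:ℝ)..R, g2 l) = ∫ l in (2:ℝ)..R, (l:ℂ)^w := by
      refine intervalIntegral.integral_congr fun l hl => ?_
      rw [Set.uIcc_of_le (by linarith : (2:ℝ) ≤ R)] at hl
      simp only [hg2def, hχ1 l hl.1, Complex.ofReal_one, one_mul]
    rw [h1]
    refine intervalIntegral.integral_eq_sub_of_hasDerivAt
      (f := fun y : ℝ => (y:ℂ)^(w+1)/(w+1)) (fun l hl => ?_) ?_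
    · have hl0 : l ≠ 0 := ne_of_gt (huIcc2 hl)
      have := aux_hasDerivAt_cpow (w+1) hwp1ne hl0
      simpa [add_sub_cancel_right] using this
    · exact ((aux_contOn w).mono huIcc2).intervalIntegrable
  have habsg2b : ‖∫ l in (2:ℝ)..R, g2 l‖ ≤ 2 / |ζ| := by
    rw [hFTC]
    have habs1 : ∀ c : ℝ, 0 < c → ‖((c:ℝ):ℂ)^(w+1)‖ = 1 := by
      intro c hc
      rw [Complex.norm_cpow_eq_rpow_re_of_pos hc, hwp1]
      simp
    have hζ0 : (0:ℝ) < |ζ| := abs_pos.2 hζ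
    calc ‖((R:ℝ):ℂ)^(w+1)/(w+1) - ((2:ℝ):ℂ)^(w+1)/(w+1)‖
        ≤ ‖((R:ℝ):ℂ)^(w+1)/(w+1)‖ + ‖((2:ℝ):ℂ)^(w+1)/(w+1)‖ := norm_sub_le _ _
      _ = 1/|ζ| + 1/|ζ| := by
          rw [norm_div, norm_div,
            habs1 R hR0, habs1 2 (by norm_num), habsw1]
      _ = 2/|ζ| := by ring
  set B1 : ℂ := ∫ l in (1:ℝ)..R, g1 l with hB1def
  set B2 : ℂ := ∫ l in (1:ℝ)..(2:ℝ), g2 l with hB2def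
  set B3 : ℂ := ∫ l in (2:ℝ)..R, g2 l with hB3def
  have hAabs : ‖A‖ ≤ 3 + 2/|ζ| := by
    rw [hA12]
    have h1 := norm_add_le B1 (B2 + B3)
    have h2 := norm_add_le B2 B3
    linarith [habsg1, habsg2a, habsg2b]
  have hvRabs : ‖(R:ℂ)^w * v R‖ = 1 := by
    have hvn : ‖v R‖ = 1/|x| := by
      rw [hvdef]
      simp only [norm_div, hexp1 R, norm_mul, Complex.norm_I, Complex.norm_real, Real.norm_eq_abs, one_mul]
    rw [norm_mul, Complex.norm_cpow_eq_rpow_re_of_pos hR0, hwre,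
      Real.rpow_neg_one, hvn, hRdef]
    field_simp
  have hwabs : ‖w‖ ≤ 1 + |ζ| := by
    rw [hwdef]
    calc ‖-1 - Complex.I * ζ‖
        ≤ ‖-1‖ + ‖Complex.I * ζ‖ := by
          have := norm_sub_le (-1 : ℂ) (Complex.I * ζ)
          simpa using this
      _ = 1 + |ζ| := by simp [Complex.norm_real, Real.norm_eq_abs]
  have hterm3 : ‖(w / (Complex.I*x)) * J‖ ≤ 1 + |ζ| := by
    have hIx : ‖Complex.I * x‖ = |x| := by
      simp [norm_mul, Complex.norm_I, Complex.norm_real, Real.norm_eq_abs]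
    rw [norm_mul, norm_div, hIx]
    calc ‖w‖ / |x| * ‖J‖ ≤ (1 + |ζ|) / |x| * |x| := by gcongr
      _ = 1 + |ζ| := by field_simp
  have hLabs : ‖L‖ ≤ 5 + 2/|ζ| + |ζ| := by
    have hre : L = A + (-((R:ℂ)^w * v R + (w / (Complex.I*x)) * J)) := by
      rw [hLdef]; ring
    calc ‖L‖ ≤ ‖A‖ + ‖(R:ℂ)^w * v R + (w / (Complex.I*x)) * J‖ := by
          rw [hre]
          exact le_trans (norm_add_le _ _) (by rw [norm_neg])
      _ ≤ ‖A‖ + (‖(R:ℂ)^w * v R‖ + ‖(w / (Complex.I*x)) * J‖) := by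
          gcongr
          exact norm_add_le _ _
      _ ≤ (3 + 2/|ζ|) + (1 + (1 + |ζ|)) := by
          rw [hvRabs]
          gcongr
      _ = 5 + 2/|ζ| + |ζ| := by ring
  -- assemble
  refine ⟨(ζ:ℂ) * Complex.I^m * L + Kf, ?_, ?_⟩
  · have hW : ∀ T : ℝ, (∫ l in (-T)..T,
        ((ζ : ℂ) * (χ l : ℂ) * (l : ℂ) ^ (-(m : ℂ) - 1 - Complex.I * ζ) + f l) *
          (Complex.I * l) ^ m * Complex.exp (Complex.I * l * x))
        = (ζ:ℂ) * Complex.I^m * (∫ l in (-T)..T, G l) + ∫ l in (-T)..T, Ff l := by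
      intro T
      rw [← intervalIntegral.integral_const_mul,
        ← intervalIntegral.integral_add ((hGint (-T) T).const_mul _)
          (hFfcont.intervalIntegrable _ _)]
      refine intervalIntegral.integral_congr fun l _ => ?_
      have hkey : (χ l : ℂ) * (l:ℂ)^(-(m:ℂ) - 1 - Complex.I * ζ) * (l:ℂ)^m
          = (χ l : ℂ) * (l:ℂ)^w := by
        rcases le_or_gt l 1 with h | h
        · simp [hχ0 l h]
        · have hl0 : (l:ℂ) ≠ 0 := by
            simp only [ne_eq, Complex.ofReal_eq_zero]
            linarith
          rw [mul_assoc, ← Complex.cpow_natCast (l:ℂ) m, ← Complex.cpow_add _ _ hl0]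
          congr 2
          rw [hwdef]
          ring
      simp only [hGdef, hFfdef, mul_pow]
      linear_combination (ζ:ℂ) * Complex.I^m * Complex.exp (Complex.I*l*x) * hkey
    refine Tendsto.congr (fun T => (hW T).symm) ((hGlim.const_mul _).add hKftend)
  · skip
    have hznrm : ‖(ζ:ℂ) * Complex.I^m * L‖ = |ζ| * ‖L‖ := by
      rw [norm_mul, norm_mul, Complex.norm_real, norm_pow, Complex.norm_I, one_pow,
        Real.norm_eq_abs, mul_one]
    have h1 : ‖(ζ:ℂ) * Complex.I^m * L + Kf‖ ≤ |ζ| * ‖L‖ + ‖Kf‖ := by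
      calc ‖(ζ:ℂ) * Complex.I^m * L + Kf‖ ≤ ‖(ζ:ℂ) * Complex.I^m * L‖ + ‖Kf‖ :=
          norm_add_le _ _
        _ = |ζ| * ‖L‖ + ‖Kf‖ := by rw [hznrm]
    have h2 : |ζ| * ‖L‖ ≤ |ζ| * (5 + 2/|ζ| + |ζ|) :=
      mul_le_mul_of_nonneg_left hLabs (abs_nonneg ζ)
    have hζ0 : (0:ℝ) < |ζ| := abs_pos.2 hζ
    have h3 : |ζ| * (5 + 2/|ζ| + |ζ|) = 5 * |ζ| + 2 + ζ^2 := by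
      field_simp
      nlinarith [sq_abs ζ]
    nlinarith [sq_nonneg (|ζ| - 1), abs_nonneg ζ, sq_abs ζ, hKfabs, hSnn, hI₀nn,
      norm_nonneg L, norm_nonneg Kf]
end
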